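/- Let η > 0, g ∈ H^1, Γ ⊂ ℕ infinite, and T : SL^∞ → SL^∞ a bounded linear operator. Then there exists an infinite set Λ ⊂ Γ such that sup_{‖f‖_{SL^∞} ≤ 1} |⟨T P_Λ f, g⟩| ≤ η ‖g‖_{H^1}, where P_Λ is the norm-one projection onto the Haar levels indexed by Λ. -/

import Mathlib

/- Setup: dyadic intervals on [0,1), L^∞-normalized Haar coefficients, the SL^∞
square-function norm, the dyadic H^1 norm, and the L² pairing, all expressed on
the space `Dy → ℝ` of Haar coefficient sequences. -/

open MeasureTheory Filter ENNReal

noncomputable section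

/-- Dyadic intervals, encoded as pairs (n, k) with k < 2^n. -/
abbrev Dy := {p : ℕ × ℕ // p.2 < 2 ^ p.1}

/-- The level (frequency) of a dyadic interval. -/
def dlev (I : Dy) : ℕ := I.val.1

/-- The dyadic interval [k/2^n, (k+1)/2^n) as a subset of ℝ. -/
def dint (I : Dy) : Set ℝ :=
  Set.Ico ((I.val.2 : ℝ) / 2 ^ I.val.1) ((I.val.2 + 1 : ℝ) / 2 ^ I.val.1)

/-- The length |I| = 2^{-n} of a dyadic interval. -/
def dlen (I : Dy) : ℝ := ((2 : ℝ) ^ I.val.1)⁻¹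

/-- The square function (Σ_I a_I² 1_I(x)) of the Haar series with coefficients `a`. -/
def sqFn (a : Dy → ℝ) (x : ℝ) : ℝ≥0∞ :=
  ∑' I : Dy, Set.indicator (dint I) (fun _ => ENNReal.ofReal ((a I) ^ 2)) x

/-- The SL^∞ norm: ‖Σ a_I h_I‖ = sup_x (Σ a_I² 1_I(x))^{1/2}. -/
def slNorm (a : Dy → ℝ) : ℝ≥0∞ := ⨆ x : ℝ, sqFn a x ^ (1 / 2 : ℝ)

/-- The dyadic H^1 norm: ∫₀¹ (Σ a_I² 1_I(x))^{1/2} dx. -/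
def h1Norm (a : Dy → ℝ) : ℝ≥0∞ := ∫⁻ x in Set.Ico (0 : ℝ) 1, sqFn a x ^ (1 / 2 : ℝ)

/-- The L² pairing ⟨f, g⟩ = Σ_I a_I b_I |I| of two Haar series. -/
def pairing (a b : Dy → ℝ) : ℝ := ∑' I : Dy, a I * b I * dlen I


/-- The coordinate projection P_Λ onto the Haar levels indexed by Λ. -/
def levProj (Λ : Set ℕ) (a : Dy → ℝ) : Dy → ℝ :=
  fun I => Set.indicator Λ (fun _ => a I) (dlev I)

lemma dlen_pos (I : Dy) : 0 < dlen I := by unfold dlen; positivity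

lemma dint_subset (I : Dy) : dint I ⊆ Set.Ico (0:ℝ) 1 := by
  obtain ⟨⟨n, k⟩, hk⟩ := I
  intro x hx
  simp only [dint] at hx
  obtain ⟨h1, h2⟩ := hx
  constructor
  · exact le_trans (by positivity) h1
  · refine lt_of_lt_of_le h2 ?_
    rw [div_le_one (by positivity)]
    exact_mod_cast Nat.succ_le_of_lt hk

lemma measurableSet_dint (I : Dy) : MeasurableSet (dint I) := measurableSet_Ico

lemma volume_dint (I : Dy) : volume (dint I) = ENNReal.ofReal (dlen I) := by
  obtain ⟨⟨n, k⟩, hk⟩ := I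
  simp only [dint, dlen, Real.volume_Ico]
  congr 1
  field_simp
  ring

-- Cauchy-Schwarz for ENNReal tsums
lemma tsum_CS (f g : Dy → ℝ≥0∞) :
    ∑' I, (f I) ^ (1/2:ℝ) * (g I) ^ (1/2:ℝ) ≤ (∑' I, f I) ^ (1/2:ℝ) * (∑' I, g I) ^ (1/2:ℝ) := by
  have hpq : Real.HolderConjugate 2 2 := Real.holderConjugate_iff.mpr ⟨one_lt_two, by norm_num⟩
  have h := ENNReal.lintegral_mul_le_Lp_mul_Lq (Measure.count (α := Dy)) hpq
    (f := fun I => (f I) ^ (1/2:ℝ)) (g := fun I => (g I) ^ (1/2:ℝ))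
    (measurable_of_countable _).aemeasurable (measurable_of_countable _).aemeasurable
  simp only [lintegral_count] at h
  have e : ∀ h : Dy → ℝ≥0∞, ∀ I, ((h I) ^ (1/2:ℝ)) ^ (2:ℝ) = h I := by
    intro h I
    rw [← ENNReal.rpow_mul]
    norm_num
  calc ∑' I, (f I) ^ (1/2:ℝ) * (g I) ^ (1/2:ℝ)
      ≤ (∑' I, ((f I) ^ (1/2:ℝ)) ^ (2:ℝ)) ^ (1/(2:ℝ)) * (∑' I, ((g I) ^ (1/2:ℝ)) ^ (2:ℝ)) ^ (1/(2:ℝ)) := by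
        simpa using h
    _ = (∑' I, f I) ^ (1/2:ℝ) * (∑' I, g I) ^ (1/2:ℝ) := by
        simp only [e]

lemma sqFn_mono {a b : Dy → ℝ} (h : ∀ I, (a I)^2 ≤ (b I)^2) (x : ℝ) : sqFn a x ≤ sqFn b x := by
  refine ENNReal.tsum_le_tsum fun I => ?_
  by_cases hx : x ∈ dint I
  · simp [Set.indicator_of_mem hx, ENNReal.ofReal_le_ofReal (h I)]
  · simp [Set.indicator_of_notMem hx]

lemma slNorm_mono {a b : Dy → ℝ} (h : ∀ I, (a I)^2 ≤ (b I)^2) : slNorm a ≤ slNorm b :=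
  iSup_mono fun x => ENNReal.rpow_le_rpow (sqFn_mono h x) (by norm_num)

lemma sqFn_le_slNorm_sq (a : Dy → ℝ) (x : ℝ) : sqFn a x ≤ slNorm a ^ (2:ℝ) := by
  have h1 : sqFn a x ^ (1/2:ℝ) ≤ slNorm a := le_iSup (fun x => sqFn a x ^ (1/2:ℝ)) x
  calc sqFn a x = (sqFn a x ^ (1/2:ℝ)) ^ (2:ℝ) := by rw [← ENNReal.rpow_mul]; norm_num
    _ ≤ slNorm a ^ (2:ℝ) := ENNReal.rpow_le_rpow h1 (by norm_num)

lemma slNorm_levProj_le (Λ : Set ℕ) (f : Dy → ℝ) : slNorm (levProj Λ f) ≤ slNorm f := by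
  refine slNorm_mono fun I => ?_
  unfold levProj
  by_cases h : dlev I ∈ Λ
  · simp [Set.indicator_of_mem h]
  · simp [Set.indicator_of_notMem h, sq_nonneg]

-- pointwise Cauchy-Schwarz
lemma pointwise_CS (a b : Dy → ℝ) (x : ℝ) :
    ∑' I : Dy, Set.indicator (dint I) (fun _ => ENNReal.ofReal (|a I * b I|)) x
      ≤ (sqFn a x) ^ (1/2:ℝ) * (sqFn b x) ^ (1/2:ℝ) := by
  have key : ∀ I : Dy, Set.indicator (dint I) (fun _ => ENNReal.ofReal (|a I * b I|)) x
      = (Set.indicator (dint I) (fun _ => ENNReal.ofReal ((a I)^2)) x) ^ (1/2:ℝ)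
        * (Set.indicator (dint I) (fun _ => ENNReal.ofReal ((b I)^2)) x) ^ (1/2:ℝ) := by
    intro I
    by_cases hx : x ∈ dint I
    · simp only [Set.indicator_of_mem hx]
      rw [ENNReal.ofReal_rpow_of_nonneg (sq_nonneg (a I)) (by norm_num : (0:ℝ) ≤ 1/2),
          ENNReal.ofReal_rpow_of_nonneg (sq_nonneg (b I)) (by norm_num : (0:ℝ) ≤ 1/2),
          ← ENNReal.ofReal_mul (by positivity)]
      congr 1
      rw [abs_mul, ← Real.sqrt_eq_rpow, ← Real.sqrt_eq_rpow, Real.sqrt_sq_eq_abs,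
        Real.sqrt_sq_eq_abs]
    · simp [Set.indicator_of_notMem hx]
  calc ∑' I : Dy, Set.indicator (dint I) (fun _ => ENNReal.ofReal (|a I * b I|)) x
      = ∑' I : Dy, (Set.indicator (dint I) (fun _ => ENNReal.ofReal ((a I)^2)) x) ^ (1/2:ℝ)
        * (Set.indicator (dint I) (fun _ => ENNReal.ofReal ((b I)^2)) x) ^ (1/2:ℝ) := by
        exact tsum_congr key
    _ ≤ (sqFn a x) ^ (1/2:ℝ) * (sqFn b x) ^ (1/2:ℝ) := tsum_CS _ _

lemma tsum_abs_terms_le (a b : Dy → ℝ) :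
    ∑' I : Dy, ENNReal.ofReal |a I * b I * dlen I| ≤ slNorm a * h1Norm b := by
  have step1 : ∀ I : Dy, ENNReal.ofReal |a I * b I * dlen I|
      = ∫⁻ x in Set.Ico (0:ℝ) 1, Set.indicator (dint I) (fun _ => ENNReal.ofReal (|a I * b I|)) x := by
    intro I
    rw [lintegral_indicator_const (measurableSet_dint I)]
    rw [Measure.restrict_apply (measurableSet_dint I),
        Set.inter_eq_self_of_subset_left (dint_subset I), volume_dint]
    rw [← ENNReal.ofReal_mul (abs_nonneg _)]
    congr 1
    rw [abs_mul, abs_of_pos (dlen_pos I)]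
  calc ∑' I : Dy, ENNReal.ofReal |a I * b I * dlen I|
      = ∑' I : Dy, ∫⁻ x in Set.Ico (0:ℝ) 1,
          Set.indicator (dint I) (fun _ => ENNReal.ofReal (|a I * b I|)) x := tsum_congr step1
    _ = ∫⁻ x in Set.Ico (0:ℝ) 1, ∑' I : Dy,
          Set.indicator (dint I) (fun _ => ENNReal.ofReal (|a I * b I|)) x := by
        exact (lintegral_tsum fun I =>
          (measurable_const.indicator (measurableSet_dint I)).aemeasurable).symm
    _ ≤ ∫⁻ x in Set.Ico (0:ℝ) 1, (sqFn a x) ^ (1/2:ℝ) * (sqFn b x) ^ (1/2:ℝ) :=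
        lintegral_mono fun x => pointwise_CS a b x
    _ ≤ ∫⁻ x in Set.Ico (0:ℝ) 1, slNorm a * (sqFn b x) ^ (1/2:ℝ) := by
        refine lintegral_mono fun x => mul_le_mul_left ?_ _
        exact le_iSup (fun x => sqFn a x ^ (1/2:ℝ)) x
    _ = slNorm a * h1Norm b := by
        rw [h1Norm]
        refine lintegral_const_mul _ ?_
        exact (Measurable.ennreal_tsum fun I =>
          measurable_const.indicator (measurableSet_dint I)).pow measurable_const

lemma summable_of_tsum_ofReal_ne_top {u : Dy → ℝ} (h : ∑' I : Dy, ENNReal.ofReal |u I| ≠ ⊤) :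
    Summable fun I : Dy => |u I| := by
  have : ∀ I, ENNReal.ofReal |u I| = ((Real.toNNReal (|u I|) : NNReal) : ℝ≥0∞) := fun I => rfl
  rw [tsum_congr this] at h
  have hs := ENNReal.tsum_coe_ne_top_iff_summable.mp h
  have := NNReal.summable_coe.mpr hs
  convert this using 2 with I
  simp [Real.coe_toNNReal _ (abs_nonneg (u I))]

lemma pairing_abs_le (a b : Dy → ℝ) :
    ENNReal.ofReal |pairing a b| ≤ slNorm a * h1Norm b := by
  by_cases htop : ∑' I : Dy, ENNReal.ofReal |a I * b I * dlen I| = ⊤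
  · by_cases hs : Summable fun I : Dy => a I * b I * dlen I
    · exact le_trans (by simp) (htop ▸ tsum_abs_terms_le a b)
    · simp [pairing, tsum_eq_zero_of_not_summable hs]
  · have habs : Summable fun I : Dy => |a I * b I * dlen I| :=
      summable_of_tsum_ofReal_ne_top htop
    have hs : Summable fun I : Dy => a I * b I * dlen I := habs.of_abs
    have habs' : Summable fun I : Dy => ‖a I * b I * dlen I‖ := by
      simp_rw [Real.norm_eq_abs]; exact habs
    have h1 : |pairing a b| ≤ ∑' I : Dy, |a I * b I * dlen I| := by
      have := norm_tsum_le_tsum_norm habs'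
      simp_rw [Real.norm_eq_abs] at this
      exact this
    calc ENNReal.ofReal |pairing a b| ≤ ENNReal.ofReal (∑' I : Dy, |a I * b I * dlen I|) :=
          ENNReal.ofReal_le_ofReal h1
      _ = ∑' I : Dy, ENNReal.ofReal |a I * b I * dlen I| :=
          ENNReal.ofReal_tsum_of_nonneg (fun I => abs_nonneg _) habs
      _ ≤ slNorm a * h1Norm b := tsum_abs_terms_le a b

lemma pairing_summable {a b : Dy → ℝ} (ha : slNorm a ≠ ⊤) (hb : h1Norm b ≠ ⊤) :
    Summable fun I : Dy => a I * b I * dlen I := by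
  refine Summable.of_abs (summable_of_tsum_ofReal_ne_top ?_)
  exact ne_top_of_le_ne_top (ENNReal.mul_ne_top ha hb) (tsum_abs_terms_le a b)

lemma pairing_abs_le' {a b : Dy → ℝ} (ha : slNorm a ≠ ⊤) (hb : h1Norm b ≠ ⊤) :
    |pairing a b| ≤ (slNorm a).toReal * (h1Norm b).toReal := by
  have h := pairing_abs_le a b
  have hfin : slNorm a * h1Norm b ≠ ⊤ := ENNReal.mul_ne_top ha hb
  have h2 := ENNReal.toReal_mono hfin h
  rwa [ENNReal.toReal_ofReal (abs_nonneg _), ENNReal.toReal_mul] at h2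

lemma levProj_neg (Λ : Set ℕ) (f : Dy → ℝ) : levProj Λ (-f) = -(levProj Λ f) := by
  funext I
  unfold levProj
  by_cases h : dlev I ∈ Λ <;> simp [h]

lemma slNorm_neg (f : Dy → ℝ) : slNorm (-f) = slNorm f := by
  refine le_antisymm (slNorm_mono fun I => ?_) (slNorm_mono fun I => ?_) <;> simp

lemma pairing_neg (a b : Dy → ℝ) : pairing (-a) b = -pairing a b := by
  unfold pairing
  rw [← tsum_neg]
  congr 1; funext I; simp

lemma pairing_sum {k : ℕ} (A : Fin k → Dy → ℝ) (b : Dy → ℝ)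
    (h : ∀ j, Summable fun I : Dy => A j I * b I * dlen I) :
    pairing (fun I => ∑ j, A j I) b = ∑ j, pairing (A j) b := by
  unfold pairing
  rw [← Summable.tsum_finsetSum (fun j _ => h j)]
  congr 1; funext I
  rw [Finset.sum_mul, Finset.sum_mul]

lemma sq_sum_of_disjoint {k : ℕ} (Λ : Fin k → Set ℕ)
    (hdisj : ∀ j j', j ≠ j' → Disjoint (Λ j) (Λ j')) (f : Fin k → Dy → ℝ) (I : Dy) :
    (∑ j, levProj (Λ j) (f j) I) ^ 2 = ∑ j, (levProj (Λ j) (f j) I) ^ 2 := by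
  by_cases hex : ∃ j0, dlev I ∈ Λ j0
  · obtain ⟨j0, hj0⟩ := hex
    have hzero : ∀ j ∈ Finset.univ, j ≠ j0 → levProj (Λ j) (f j) I = 0 := by
      intro j _ hj
      have : dlev I ∉ Λ j := fun hmem => (hdisj j j0 hj).ne_of_mem hmem hj0 rfl
      simp [levProj, Set.indicator_of_notMem this]
    rw [Finset.sum_eq_single_of_mem j0 (Finset.mem_univ j0) hzero,
        Finset.sum_eq_single_of_mem j0 (Finset.mem_univ j0) (fun j hj hne => by
          rw [hzero j hj hne]; ring)]
  · push_neg at hex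
    have : ∀ j, levProj (Λ j) (f j) I = 0 := fun j => by
      simp [levProj, Set.indicator_of_notMem (hex j)]
    simp [this]

lemma sqFn_sum_of_disjoint {k : ℕ} (Λ : Fin k → Set ℕ)
    (hdisj : ∀ j j', j ≠ j' → Disjoint (Λ j) (Λ j')) (f : Fin k → Dy → ℝ) (x : ℝ) :
    sqFn (fun I => ∑ j, levProj (Λ j) (f j) I) x = ∑ j, sqFn (levProj (Λ j) (f j)) x := by
  unfold sqFn
  rw [← Summable.tsum_finsetSum (fun j _ => ENNReal.summable)]
  congr 1; funext I
  by_cases hx : x ∈ dint I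
  · simp only [Set.indicator_of_mem hx]
    rw [sq_sum_of_disjoint Λ hdisj f I]
    exact ENNReal.ofReal_sum_of_nonneg (fun j _ => sq_nonneg _)
  · simp [Set.indicator_of_notMem hx]

lemma slNorm_sum_le {k : ℕ} (Λ : Fin k → Set ℕ)
    (hdisj : ∀ j j', j ≠ j' → Disjoint (Λ j) (Λ j')) (f : Fin k → Dy → ℝ)
    (hf : ∀ j, slNorm (f j) ≤ 1) :
    slNorm (fun I => ∑ j, levProj (Λ j) (f j) I) ≤ (k : ℝ≥0∞) ^ (1/2:ℝ) := by
  refine iSup_le fun x => ?_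
  refine ENNReal.rpow_le_rpow ?_ (by norm_num)
  rw [sqFn_sum_of_disjoint Λ hdisj f x]
  calc ∑ j, sqFn (levProj (Λ j) (f j)) x ≤ ∑ _j : Fin k, (1:ℝ≥0∞) := by
        refine Finset.sum_le_sum fun j _ => ?_
        have h1 : sqFn (levProj (Λ j) (f j)) x ≤ sqFn (f j) x := by
          refine sqFn_mono (fun I => ?_) x
          unfold levProj
          by_cases h : dlev I ∈ Λ j
          · simp [Set.indicator_of_mem h]
          · simp [Set.indicator_of_notMem h, sq_nonneg]
        refine h1.trans ((sqFn_le_slNorm_sq _ x).trans ?_)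
        calc slNorm (f j) ^ (2:ℝ) ≤ (1:ℝ≥0∞) ^ (2:ℝ) := ENNReal.rpow_le_rpow (hf j) (by norm_num)
          _ = 1 := by simp
    _ = (k : ℝ≥0∞) := by simp

lemma exists_disjoint_family (Γ : Set ℕ) (hΓ : Γ.Infinite) (k : ℕ) (hk : 0 < k) :
    ∃ Λ : Fin k → Set ℕ, (∀ j, Λ j ⊆ Γ) ∧ (∀ j, (Λ j).Infinite) ∧
      (∀ j j', j ≠ j' → Disjoint (Λ j) (Λ j')) := by
  obtain e := hΓ.natEmbedding
  refine ⟨fun j => Set.range (fun m : ℕ => ((e (m * k + j.val) : Γ) : ℕ)), ?_, ?_, ?_⟩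
  · rintro j n ⟨m, rfl⟩
    exact (e (m * k + j.val)).2
  · intro j
    refine Set.infinite_range_of_injective ?_
    intro m m' h
    have h2 := e.injective (Subtype.ext h)
    have h3 := Nat.add_right_cancel h2
    exact Nat.eq_of_mul_eq_mul_right hk h3
  · intro j j' hne
    rw [Set.disjoint_left]
    rintro n ⟨m, rfl⟩ ⟨m', hm'⟩
    have h2 := e.injective (Subtype.ext hm')
    have h3 : (k * m' + j'.val) % k = (k * m + j.val) % k := by
      rw [mul_comm k m', mul_comm k m, h2]
    rw [Nat.mul_add_mod, Nat.mul_add_mod, Nat.mod_eq_of_lt j'.2, Nat.mod_eq_of_lt j.2] at h3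
    exact hne (Fin.ext h3.symm)

/-- the sieve lemma: given η > 0, g ∈ H^1, an infinite Γ ⊂ ℕ and a bounded
operator T on SL^∞, there is an infinite Λ ⊂ Γ with
sup_{‖f‖_{SL^∞} ≤ 1} |⟨T P_Λ f, g⟩| ≤ η ‖g‖_{H^1}. -/
theorem sieve_lemma (η : ℝ) (hη : 0 < η) (g : Dy → ℝ) (hg : h1Norm g ≠ ⊤)
    (Γ : Set ℕ) (hΓ : Γ.Infinite)
    (T : (Dy → ℝ) →ₗ[ℝ] (Dy → ℝ)) (C : NNReal)
    (hT : ∀ f : Dy → ℝ, slNorm (T f) ≤ (C : ℝ≥0∞) * slNorm f) :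
    ∃ Λ : Set ℕ, Λ ⊆ Γ ∧ Λ.Infinite ∧
      ∀ f : Dy → ℝ, slNorm f ≤ 1 →
        |pairing (T (levProj Λ f)) g| ≤ η * (h1Norm g).toReal := by
  by_contra hcon
  push_neg at hcon
  set G := (h1Norm g).toReal with hGdef
  have hG0 : 0 ≤ G := ENNReal.toReal_nonneg
  set k : ℕ := ⌈((C : ℝ) / η) ^ 2⌉₊ + 1 with hkdef
  have hk : 0 < k := Nat.succ_pos _
  obtain ⟨Λ, hΛΓ, hΛinf, hΛdisj⟩ := exists_disjoint_family Γ hΓ k hk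
  -- choose bad vectors
  have hch : ∀ j : Fin k, ∃ f : Dy → ℝ, slNorm f ≤ 1 ∧
      η * G < |pairing (T (levProj (Λ j) f)) g| := fun j => hcon (Λ j) (hΛΓ j) (hΛinf j)
  choose f0 hf1 hf2 using hch
  -- fix signs
  set f : Fin k → Dy → ℝ := fun j =>
    if 0 ≤ pairing (T (levProj (Λ j) (f0 j))) g then f0 j else -(f0 j) with hfdef
  have hf1' : ∀ j, slNorm (f j) ≤ 1 := by
    intro j
    by_cases h : 0 ≤ pairing (T (levProj (Λ j) (f0 j))) g
    · simpa [hfdef, h] using hf1 j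
    · simp only [hfdef, if_neg h]
      rw [slNorm_neg]
      exact hf1 j
  have hf2' : ∀ j, η * G < pairing (T (levProj (Λ j) (f j))) g := by
    intro j
    by_cases h : 0 ≤ pairing (T (levProj (Λ j) (f0 j))) g
    · simpa [hfdef, h, abs_of_nonneg h] using hf2 j
    · simp only [hfdef, if_neg h]
      rw [levProj_neg, map_neg, pairing_neg]
      push_neg at h
      have := hf2 j
      rwa [abs_of_neg h] at this
  -- the big vector
  set F : Dy → ℝ := fun I => ∑ j, levProj (Λ j) (f j) I with hFdef
  have hslF : slNorm F ≤ (k : ℝ≥0∞) ^ (1/2:ℝ) := slNorm_sum_le Λ hΛdisj f hf1'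
  have hkne : ((k : ℝ≥0∞)) ^ (1/2:ℝ) ≠ ⊤ :=
    ENNReal.rpow_ne_top_of_nonneg (by norm_num) (ENNReal.natCast_ne_top k)
  have hTF : slNorm (T F) ≤ (C : ℝ≥0∞) * (k : ℝ≥0∞) ^ (1/2:ℝ) :=
    (hT F).trans (mul_le_mul_right hslF _)
  have hTFne : slNorm (T F) ≠ ⊤ :=
    ne_top_of_le_ne_top (ENNReal.mul_ne_top ENNReal.coe_ne_top hkne) hTF
  -- summand norms finite
  have hsummandne : ∀ j : Fin k, slNorm (T (levProj (Λ j) (f j))) ≠ ⊤ := by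
    intro j
    have hle : slNorm (T (levProj (Λ j) (f j))) ≤ (C : ℝ≥0∞) * 1 :=
      (hT _).trans (mul_le_mul_right ((slNorm_levProj_le _ _).trans (hf1' j)) _)
    exact ne_top_of_le_ne_top (ENNReal.mul_ne_top ENNReal.coe_ne_top ENNReal.one_ne_top) hle
  have hsum : ∀ j : Fin k, Summable fun I : Dy => (T (levProj (Λ j) (f j))) I * g I * dlen I :=
    fun j => pairing_summable (hsummandne j) hg
  -- decompose the pairing
  have hTFeq : T F = fun I => ∑ j, (T (levProj (Λ j) (f j))) I := by
    have : F = ∑ j, levProj (Λ j) (f j) := by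
      funext I
      rw [Finset.sum_apply]
    rw [this, map_sum]
    funext I
    rw [Finset.sum_apply]
  have hdecomp : pairing (T F) g = ∑ j, pairing (T (levProj (Λ j) (f j))) g := by
    rw [hTFeq]
    exact pairing_sum _ g hsum
  -- lower bound
  have hlow : (k : ℝ) * (η * G) < pairing (T F) g := by
    rw [hdecomp]
    haveI : Nonempty (Fin k) := Fin.pos_iff_nonempty.mp hk
    have h1 : ∑ _j : Fin k, (η * G) < ∑ j, pairing (T (levProj (Λ j) (f j))) g :=
      Finset.sum_lt_sum_of_nonempty Finset.univ_nonempty (fun j _ => hf2' j)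
    have h2 : ∑ _j : Fin k, (η * G) = (k:ℝ) * (η * G) := by
      simp [Finset.sum_const, nsmul_eq_mul]
    linarith
  -- upper bound
  have hup : |pairing (T F) g| ≤ (C : ℝ) * ((k:ℝ) ^ (1/2:ℝ)) * G := by
    refine (pairing_abs_le' hTFne hg).trans ?_
    refine mul_le_mul_of_nonneg_right ?_ hG0
    have h1 := ENNReal.toReal_mono (ENNReal.mul_ne_top ENNReal.coe_ne_top hkne) hTF
    rwa [ENNReal.toReal_mul, ENNReal.coe_toReal, ← ENNReal.toReal_rpow,
      ENNReal.toReal_natCast] at h1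
  -- contradiction
  set r : ℝ := (k:ℝ) ^ (1/2:ℝ) with hrdef
  have hr0 : 0 ≤ r := Real.rpow_nonneg (Nat.cast_nonneg k) _
  have hr2 : r ^ 2 = (k:ℝ) := by
    rw [hrdef, ← Real.rpow_natCast ((k:ℝ) ^ (1/2:ℝ)) 2, ← Real.rpow_mul (Nat.cast_nonneg k)]
    norm_num
  have hkbig : ((C : ℝ) / η) ^ 2 < (k:ℝ) := by
    have h1 := Nat.le_ceil (((C : ℝ) / η) ^ 2)
    have h2 : (⌈((C : ℝ) / η) ^ 2⌉₊ : ℝ) < (k : ℝ) := by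
      rw [hkdef]; push_cast; linarith
    linarith
  have hC2 : (C : ℝ) ^ 2 < (k:ℝ) * η ^ 2 := by
    rw [div_pow] at hkbig
    calc (C : ℝ) ^ 2 = ((C:ℝ)^2 / η^2) * η^2 := by field_simp
      _ < (k:ℝ) * η ^ 2 := by
        exact mul_lt_mul_of_pos_right hkbig (by positivity)
  have hsq : (C : ℝ) ^ 2 < (r * η) ^ 2 := by
    rw [mul_pow, hr2]; exact hC2
  have hClt : (C : ℝ) < r * η := lt_of_pow_lt_pow_left₀ 2 (mul_nonneg hr0 hη.le) hsq
  have hfinal : pairing (T F) g ≤ (C : ℝ) * r * G := le_trans (le_abs_self _) hup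
  have hkey : (C : ℝ) * r * G ≤ r * η * r * G :=
    mul_le_mul_of_nonneg_right (mul_le_mul_of_nonneg_right hClt.le hr0) hG0
  have heq : r * η * r * G = (k : ℝ) * (η * G) := by rw [← hr2]; ring
  linarith

end
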